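/- (Truncated Taylor polynomial approximates a local Gaussian sum; truncation-error step of Lemma 2.3.) Let d ≥ 1, let ε, ρ > 0 with ερ ≤ 1/2, let r, r' > 0 with r + r' ≥ 1, set L = log(1/(ερ)) and s = ⌈(r+r')² e² log(d/(ερ))⌉. Let q ∈ ℝ^d, let Q be a finite set of points of ℝ^d with ‖p − q‖ ≤ r'·√L for every p ∈ Q, and let x ∈ ℝ^d with ‖x − q‖ ≤ r·√L. Then |Σ_{p∈Q} exp(−‖x−p‖²) − Σ_{p∈Q} T_s(x,p)| ≤ |Q| · ερ / 8. -/

import Mathlib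

open scoped BigOperators

section Aux
open Real Finset

noncomputable def P (s : ℕ) (y : ℝ) : ℝ := ∑ j ∈ range s, (-1:ℝ)^j * y^j / (Nat.factorial j : ℝ)

lemma P_hasDeriv (s : ℕ) (y : ℝ) : HasDerivAt (P (s+1)) (-(P s y)) y := by
  have h : ∀ j ∈ range (s+1), HasDerivAt (fun t : ℝ => (-1:ℝ)^j * t^j / (Nat.factorial j : ℝ))
      ((-1:ℝ)^j * (j * y^(j-1)) / (Nat.factorial j : ℝ)) y := by
    intro j _
    simpa [mul_div_assoc] using ((hasDerivAt_pow j y).const_mul ((-1:ℝ)^j)).div_const _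
  have h2 := HasDerivAt.fun_sum h
  have e1 : (fun y => ∑ j ∈ range (s+1), (-1:ℝ)^j * y^j / (Nat.factorial j : ℝ)) = P (s+1) := rfl
  rw [e1] at h2
  refine h2.congr_deriv (Eq.symm ?_)
  rw [Finset.sum_range_succ']
  simp only [Nat.cast_zero, zero_mul, mul_zero, zero_div, add_zero, pow_zero]
  rw [P, neg_eq_iff_eq_neg, ← Finset.sum_neg_distrib]
  apply Finset.sum_congr rfl
  intro j _
  have hj : (Nat.factorial j : ℝ) ≠ 0 := Nat.cast_ne_zero.2 (Nat.factorial_ne_zero j)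
  rw [Nat.factorial_succ, pow_succ]
  push_cast [Nat.add_sub_cancel]
  field_simp

lemma P_zero (s : ℕ) : P (s+1) 0 = 1 := by
  rw [P, Finset.sum_range_succ']
  simp

lemma exp_hasDeriv (y : ℝ) : HasDerivAt (fun t : ℝ => Real.exp (-t)) (-Real.exp (-y)) y := by
  simpa using (hasDerivAt_neg y).exp

lemma P_rem (s : ℕ) : ∀ y : ℝ, 0 ≤ y → |Real.exp (-y) - P s y| ≤ y^s / (Nat.factorial s : ℝ) := by
  induction s with
  | zero =>
    intro y hy
    simp only [P, Finset.range_zero, Finset.sum_empty, sub_zero, pow_zero, Nat.factorial_zero,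
      Nat.cast_one, div_one]
    rw [abs_of_pos (Real.exp_pos _)]
    exact Real.exp_le_one_iff.2 (by linarith)
  | succ s ih =>
    intro y hy
    have hfact : (0:ℝ) < (Nat.factorial (s+1) : ℝ) := by positivity
    have hpow : ∀ t : ℝ, HasDerivAt (fun u : ℝ => u^(s+1) / (Nat.factorial (s+1) : ℝ))
        (t^s / (Nat.factorial s : ℝ)) t := by
      intro t
      have := (hasDerivAt_pow (s+1) t).div_const ((Nat.factorial (s+1) : ℝ))
      refine this.congr_deriv ?_
      rw [Nat.factorial_succ, Nat.add_sub_cancel]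
      push_cast
      have : (Nat.factorial s : ℝ) ≠ 0 := Nat.cast_ne_zero.2 (Nat.factorial_ne_zero s)
      field_simp
    -- two monotone functions
    have key : ∀ c : ℝ, c = 1 ∨ c = -1 →
        c * (Real.exp (-y) - P (s+1) y) ≤ y^(s+1) / (Nat.factorial (s+1) : ℝ) := by
      intro c hc
      set F : ℝ → ℝ := fun t => t^(s+1) / (Nat.factorial (s+1) : ℝ) - c * (Real.exp (-t) - P (s+1) t) with hF
      have hder : ∀ t : ℝ, HasDerivAt F
          (t^s / (Nat.factorial s : ℝ) - c * (-Real.exp (-t) - -(P s t))) t := by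
        intro t
        exact (hpow t).sub (((exp_hasDeriv t).sub (P_hasDeriv s t)).const_mul c)
      have hmono : MonotoneOn F (Set.Ici 0) := by
        apply monotoneOn_of_deriv_nonneg (convex_Ici 0)
        · exact fun t _ => ((hder t).differentiableAt).continuousAt.continuousWithinAt
        · exact fun t _ => ((hder t).differentiableAt).differentiableWithinAt
        · intro t ht
          rw [interior_Ici] at ht
          rw [(hder t).deriv]
          have hIH := ih t (le_of_lt ht)
          have habs : |c * (Real.exp (-t) - P s t)| ≤ t^s / (Nat.factorial s : ℝ) := by
            rcases hc with h | h <;> rw [h] <;> simp only [one_mul, neg_mul, abs_neg, neg_sub] <;> first | exact hIH | (rw [abs_sub_comm]; exact hIH)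
          have := neg_abs_le (c * (Real.exp (-t) - P s t))
          nlinarith [abs_nonneg (c * (Real.exp (-t) - P s t))]
      have h0 : F 0 = 0 := by
        simp [hF, P_zero, zero_pow (Nat.succ_ne_zero s)]
      have := hmono (Set.mem_Ici.2 le_rfl) (Set.mem_Ici.2 hy) hy
      rw [h0] at this
      simp only [hF] at this
      linarith
    rw [abs_sub_le_iff]
    constructor
    · simpa using key 1 (Or.inl rfl)
    · have := key (-1) (Or.inr rfl)
      linarith [this]

lemma prod_err {ι : Type*} (t : Finset ι) (a b : ι → ℝ) (δ : ℝ) (hδ : 0 ≤ δ)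
    (ha : ∀ i ∈ t, |a i| ≤ 1) (hab : ∀ i ∈ t, |a i - b i| ≤ δ) :
    |∏ i ∈ t, a i - ∏ i ∈ t, b i| ≤ (1+δ)^t.card - 1 := by
  classical
  induction t using Finset.induction_on with
  | empty => simp
  | insert i t hi ih =>
    have ha' : ∀ j ∈ t, |a j| ≤ 1 := fun j hj => ha j (Finset.mem_insert_of_mem hj)
    have hab' : ∀ j ∈ t, |a j - b j| ≤ δ := fun j hj => hab j (Finset.mem_insert_of_mem hj)
    have hA := ih ha' hab'
    have hB : |∏ j ∈ t, b j| ≤ (1+δ)^t.card := by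
      rw [Finset.abs_prod]
      calc ∏ j ∈ t, |b j| ≤ ∏ j ∈ t, (1+δ) := by
            apply Finset.prod_le_prod (fun j _ => abs_nonneg _)
            intro j hj
            calc |b j| ≤ |a j| + |a j - b j| := by
                  have := abs_sub_abs_le_abs_sub (b j) (a j)
                  have := abs_sub_comm (a j) (b j)
                  linarith [abs_sub_abs_le_abs_sub (b j) (a j), (abs_sub_comm (b j) (a j))]
              _ ≤ 1 + δ := add_le_add (ha' j hj) (hab' j hj)
        _ = (1+δ)^t.card := by rw [Finset.prod_const]
    rw [Finset.prod_insert hi, Finset.prod_insert hi, Finset.card_insert_of_notMem hi]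
    have hai : |a i| ≤ 1 := ha i (Finset.mem_insert_self i t)
    have habi : |a i - b i| ≤ δ := hab i (Finset.mem_insert_self i t)
    have key : a i * ∏ j ∈ t, a j - b i * ∏ j ∈ t, b j
        = a i * (∏ j ∈ t, a j - ∏ j ∈ t, b j) + (a i - b i) * ∏ j ∈ t, b j := by ring
    rw [key]
    calc |a i * (∏ j ∈ t, a j - ∏ j ∈ t, b j) + (a i - b i) * ∏ j ∈ t, b j|
        ≤ |a i| * |∏ j ∈ t, a j - ∏ j ∈ t, b j| + |a i - b i| * |∏ j ∈ t, b j| := by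
          refine (abs_add_le _ _).trans ?_
          rw [abs_mul, abs_mul]
      _ ≤ 1 * ((1+δ)^t.card - 1) + δ * (1+δ)^t.card := by
          apply add_le_add
          · exact mul_le_mul hai hA (abs_nonneg _) zero_le_one
          · exact mul_le_mul habi hB (abs_nonneg _) hδ
      _ = (1+δ)^(t.card+1) - 1 := by rw [pow_succ]; ring

lemma norm_sq_eq (d : ℕ) (v : EuclideanSpace ℝ (Fin d)) :
    ‖v‖^2 = ∑ i, (v i)^2 := by
  rw [EuclideanSpace.norm_eq, Real.sq_sqrt]
  · apply Finset.sum_congr rfl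
    intro i _
    rw [Real.norm_eq_abs, sq_abs]
  · positivity

lemma per_point (d s : ℕ) (x p : EuclideanSpace ℝ (Fin d)) (δ : ℝ) (hδ0 : 0 ≤ δ)
    (hδ : (‖x - p‖^2) ^ s / (Nat.factorial s : ℝ) ≤ δ) :
    |Real.exp (-‖x - p‖^2) -
      ∏ i, ∑ j ∈ Finset.range s, (-(x i - p i)^2)^j / (Nat.factorial j : ℝ)| ≤ (1+δ)^d - 1 := by
  have hM : ‖x - p‖^2 = ∑ i, (x i - p i)^2 := by
    rw [norm_sq_eq]
    refine Finset.sum_congr rfl fun i _ => ?_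
    simp [PiLp.sub_apply]
  have hexp : Real.exp (-‖x - p‖^2) = ∏ i, Real.exp (-(x i - p i)^2) := by
    rw [hM, ← Real.exp_sum]
    congr 1
    rw [Finset.sum_neg_distrib]
  rw [hexp]
  have hgoal : |∏ i, Real.exp (-(x i - p i)^2) -
      ∏ i, ∑ j ∈ Finset.range s, (-(x i - p i)^2)^j / (Nat.factorial j : ℝ)|
      ≤ (1+δ)^(Finset.univ : Finset (Fin d)).card - 1 := by
    apply prod_err _ _ _ _ hδ0
    · intro i _
      rw [abs_of_pos (Real.exp_pos _)]
      exact Real.exp_le_one_iff.2 (neg_nonpos.2 (sq_nonneg _))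
    · intro i _
      have hle : (x i - p i)^2 ≤ ‖x - p‖^2 := by
        rw [hM]
        exact Finset.single_le_sum (fun j _ => sq_nonneg ((x j - p j))) (Finset.mem_univ i)
      have hsum : ∑ j ∈ Finset.range s, (-(x i - p i)^2)^j / (Nat.factorial j : ℝ)
          = P s ((x i - p i)^2) := by
        rw [P]
        apply Finset.sum_congr rfl
        intro j _
        rw [neg_pow]
      rw [hsum]
      calc |Real.exp (-(x i - p i)^2) - P s ((x i - p i)^2)|
          ≤ ((x i - p i)^2)^s / (Nat.factorial s : ℝ) := P_rem s _ (sq_nonneg _)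
        _ ≤ (‖x - p‖^2) ^ s / (Nat.factorial s : ℝ) := by have := pow_le_pow_left₀ (sq_nonneg (x i - p i)) hle s; gcongr
        _ ≤ δ := hδ
  simpa using hgoal

lemma delta_le (M : ℝ) (s : ℕ) (hM : 0 ≤ M) (hs1 : 1 ≤ s)
    (hse : Real.exp 1 ^ 2 * M ≤ (s : ℝ)) :
    M ^ s / (Nat.factorial s : ℝ) ≤ Real.exp (-(s : ℝ)) := by
  have hs0 : (0:ℝ) < (s:ℝ) := by exact_mod_cast hs1
  have hfac : (0:ℝ) < (Nat.factorial s : ℝ) := by positivity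
  have h1 : (s:ℝ)^s ≤ (Nat.factorial s : ℝ) * Real.exp s := by
    have hsum := Real.sum_le_exp_of_nonneg (x := (s:ℝ)) hs0.le (s+1)
    have hterm : (s:ℝ)^s / (Nat.factorial s : ℝ) ≤
        ∑ i ∈ Finset.range (s+1), (s:ℝ)^i / (Nat.factorial i : ℝ) := by
      apply Finset.single_le_sum (f := fun i => (s:ℝ)^i / (Nat.factorial i : ℝ))
        (fun i _ => by positivity) (Finset.mem_range.2 (Nat.lt_succ_self s))
    have := hterm.trans hsum
    rw [div_le_iff₀ hfac] at this
    linarith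
  have hbase0 : 0 ≤ M * Real.exp 1 / (s:ℝ) := by positivity
  calc M ^ s / (Nat.factorial s : ℝ)
      ≤ (M * Real.exp 1 / (s:ℝ)) ^ s := by
        rw [div_pow, mul_pow, Real.exp_one_pow, div_le_div_iff₀ hfac (by positivity)]
        have := mul_le_mul_of_nonneg_left h1 (pow_nonneg hM s)
        nlinarith [Real.exp_pos (s:ℝ), pow_nonneg hM s]
    _ ≤ ((Real.exp 1)⁻¹) ^ s := by
        apply pow_le_pow_left₀ hbase0
        rw [div_le_iff₀ hs0]
        have he : (0:ℝ) < Real.exp 1 := Real.exp_pos 1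
        rw [inv_mul_eq_div, le_div_iff₀ he]
        nlinarith
    _ = Real.exp (-(s:ℝ)) := by
        rw [← Real.exp_neg, ← Real.exp_nat_mul]
        congr 1
        ring

lemma exp_sub_one_le (u : ℝ) (hu0 : 0 ≤ u) (hu : u ≤ 1/2) : Real.exp u - 1 ≤ 2 * u := by
  have h1 : 1 - u ≤ Real.exp (-u) := by linarith [Real.add_one_le_exp (-u)]
  have h2 : Real.exp (-u) * Real.exp u = 1 := by rw [← Real.exp_add]; simp
  have h3 : Real.exp u * (1 - u) ≤ 1 := by nlinarith [Real.exp_pos u]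
  nlinarith [Real.exp_pos u]


end Aux

set_option maxHeartbeats 1000000 in
theorem stmt_11 (d : ℕ) (hd : 1 ≤ d) (ε ρ : ℝ) (hε : 0 < ε) (hρ : 0 < ρ)
    (hερ : ε * ρ ≤ 1 / 2) (r r' : ℝ) (hr : 0 < r) (hr' : 0 < r') (hrr' : 1 ≤ r + r')
    (L : ℝ) (hL : L = Real.log (1 / (ε * ρ)))
    (s : ℕ) (hs : s = ⌈(r + r') ^ 2 * Real.exp 1 ^ 2 * Real.log (d / (ε * ρ))⌉₊)
    (q : EuclideanSpace ℝ (Fin d)) (Q : Finset (EuclideanSpace ℝ (Fin d)))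
    (hQ : ∀ p ∈ Q, ‖p - q‖ ≤ r' * Real.sqrt L)
    (x : EuclideanSpace ℝ (Fin d)) (hx : ‖x - q‖ ≤ r * Real.sqrt L) :
    |∑ p ∈ Q, Real.exp (-‖x - p‖ ^ 2) -
        ∑ p ∈ Q, ∏ i, ∑ j ∈ Finset.range s, (-(x i - p i) ^ 2) ^ j / (Nat.factorial j : ℝ)| ≤
      Q.card * ε * ρ / 8 := by

  set c : ℝ := ε * ρ with hcdef
  have hc0 : 0 < c := mul_pos hε hρ
  have hd1 : (1:ℝ) ≤ (d:ℝ) := by exact_mod_cast hd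
  have hdc : (0:ℝ) < (d:ℝ)/c := by positivity
  have hL0 : 0 ≤ L := by
    rw [hL]
    apply Real.log_nonneg
    rw [le_div_iff₀ hc0]
    linarith
  have hG1 : L ≤ Real.log ((d:ℝ)/c) := by
    rw [hL]
    apply Real.log_le_log (by positivity)
    gcongr
  have hGpos : 0 < Real.log ((d:ℝ)/c) := by
    apply Real.log_pos
    rw [lt_div_iff₀ hc0]
    linarith
  have hsc : (r + r') ^ 2 * Real.exp 1 ^ 2 * Real.log ((d:ℝ)/c) ≤ (s:ℝ) := by
    rw [hs]
    exact Nat.le_ceil _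
  have hrr2 : 1 ≤ (r + r')^2 := one_le_pow₀ hrr'
  have he2 : (7:ℝ) ≤ Real.exp 1 ^ 2 := by nlinarith [Real.exp_one_gt_d9]
  have hs1 : 1 ≤ s := by
    rw [hs]
    apply Nat.one_le_ceil_iff.2
    positivity
  -- the uniform bound on ‖x - p‖²
  set Mx : ℝ := (r + r')^2 * L with hMx
  have hMx0 : 0 ≤ Mx := by positivity
  set δ : ℝ := Mx ^ s / (Nat.factorial s : ℝ) with hδdef
  have hδ0 : 0 ≤ δ := by positivity
  have hδexp : δ ≤ Real.exp (-(s:ℝ)) := by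
    apply delta_le Mx s hMx0 hs1
    calc Real.exp 1 ^ 2 * Mx = (r + r')^2 * Real.exp 1 ^ 2 * L := by rw [hMx]; ring
      _ ≤ (r + r')^2 * Real.exp 1 ^ 2 * Real.log ((d:ℝ)/c) := by
          apply mul_le_mul_of_nonneg_left hG1 (by positivity)
      _ ≤ (s:ℝ) := hsc
  have hδ2 : Real.exp (-(s:ℝ)) ≤ (c/(d:ℝ))^7 := by
    have key : (7:ℝ) ≤ (r + r')^2 * Real.exp 1 ^ 2 := by nlinarith [Real.exp_pos 1]
    have h7 : 7 * Real.log ((d:ℝ)/c) ≤ (s:ℝ) := by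
      nlinarith [mul_le_mul_of_nonneg_right key hGpos.le]
    calc Real.exp (-(s:ℝ)) ≤ Real.exp (-(7 * Real.log ((d:ℝ)/c))) :=
          Real.exp_le_exp.2 (by linarith)
      _ = (c/(d:ℝ))^7 := by
          rw [show -(7 * Real.log ((d:ℝ)/c)) = (7:ℕ) * (-Real.log ((d:ℝ)/c)) by push_cast; ring,
            Real.exp_nat_mul, Real.exp_neg, Real.exp_log hdc, inv_div]
  have hdδ : (d:ℝ) * δ ≤ c/64 := by
    have hc6 : c^6 ≤ 1/64 := by
      have := pow_le_pow_left₀ hc0.le hερ 6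
      norm_num at this ⊢
      linarith
    have hd6 : (1:ℝ) ≤ (d:ℝ)^6 := one_le_pow₀ hd1
    calc (d:ℝ) * δ ≤ (d:ℝ) * (c/(d:ℝ))^7 := by
          apply mul_le_mul_of_nonneg_left (hδexp.trans hδ2) (by positivity)
      _ = c^7 / (d:ℝ)^6 := by
          rw [div_pow]
          field_simp
      _ ≤ c^7 := div_le_self (by positivity) hd6
      _ = c * c^6 := by ring
      _ ≤ c * (1/64) := mul_le_mul_of_nonneg_left hc6 hc0.le
      _ = c/64 := by ring
  -- per-point bound
  have hpp : ∀ p ∈ Q, |Real.exp (-‖x - p‖ ^ 2) -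
      ∏ i, ∑ j ∈ Finset.range s, (-(x i - p i) ^ 2) ^ j / (Nat.factorial j : ℝ)| ≤ c/8 := by
    intro p hp
    have hnorm : ‖x - p‖ ≤ (r + r') * Real.sqrt L := by
      calc ‖x - p‖ = ‖(x - q) - (p - q)‖ := by congr 1; abel
        _ ≤ ‖x - q‖ + ‖p - q‖ := norm_sub_le _ _
        _ ≤ r * Real.sqrt L + r' * Real.sqrt L := add_le_add hx (hQ p hp)
        _ = (r + r') * Real.sqrt L := by ring
    have hM : ‖x - p‖^2 ≤ Mx := by
      calc ‖x - p‖^2 ≤ ((r + r') * Real.sqrt L)^2 :=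
            pow_le_pow_left₀ (norm_nonneg _) hnorm 2
        _ = (r + r')^2 * (Real.sqrt L)^2 := by ring
        _ = Mx := by rw [Real.sq_sqrt hL0, hMx]
    have hδp : (‖x - p‖^2) ^ s / (Nat.factorial s : ℝ) ≤ δ := by
      rw [hδdef]
      have := pow_le_pow_left₀ (sq_nonneg (‖x - p‖)) hM s
      gcongr
    have h1 := per_point d s x p δ hδ0 hδp
    have h2 : (1 + δ)^d - 1 ≤ c/8 := by
      have hu0 : 0 ≤ (d:ℝ) * δ := by positivity
      have hu : (d:ℝ) * δ ≤ 1/2 := by linarith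
      have hpow : (1 + δ)^d ≤ Real.exp ((d:ℝ) * δ) := by
        calc (1 + δ)^d ≤ (Real.exp δ)^d :=
              pow_le_pow_left₀ (by linarith) (by linarith [Real.add_one_le_exp δ]) d
          _ = Real.exp ((d:ℝ) * δ) := by rw [← Real.exp_nat_mul]
      have := exp_sub_one_le ((d:ℝ) * δ) hu0 hu
      linarith
    exact h1.trans h2
  calc |∑ p ∈ Q, Real.exp (-‖x - p‖ ^ 2) -
        ∑ p ∈ Q, ∏ i, ∑ j ∈ Finset.range s, (-(x i - p i) ^ 2) ^ j / (Nat.factorial j : ℝ)|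
      = |∑ p ∈ Q, (Real.exp (-‖x - p‖ ^ 2) -
        ∏ i, ∑ j ∈ Finset.range s, (-(x i - p i) ^ 2) ^ j / (Nat.factorial j : ℝ))| := by
        rw [Finset.sum_sub_distrib]
    _ ≤ ∑ p ∈ Q, |Real.exp (-‖x - p‖ ^ 2) -
        ∏ i, ∑ j ∈ Finset.range s, (-(x i - p i) ^ 2) ^ j / (Nat.factorial j : ℝ)| :=
        Finset.abs_sum_le_sum_abs _ _
    _ ≤ ∑ _p ∈ Q, c/8 := Finset.sum_le_sum hpp
    _ = Q.card * (c/8) := by rw [Finset.sum_const, nsmul_eq_mul]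
    _ = Q.card * ε * ρ / 8 := by rw [hcdef]; ring
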